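/- If (f₁,...,fₘ) is a mutually interlacing sequence of real polynomials with positive leading coefficients, then for any 1 ≤ i < j ≤ m, the sum fᵢ + fᵢ₊₁ + ⋯ + fⱼ has only real zeros, and moreover fᵢ ⪯ (fᵢ + ⋯ + fⱼ) ⪯ fⱼ. -/

import Mathlib

open Polynomial

/-- `f` has only real zeros (every complex zero is real). -/
def RealRooted (f : Polynomial ℝ) : Prop :=
  ∀ z : ℂ, z ∈ (f.map (algebraMap ℝ ℂ)).roots → z.im = 0

/-- all zeros of `f` are real (counted with multiplicity). -/
def AllRealRoots (f : Polynomial ℝ) : Prop :=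
  f.roots.card = f.natDegree

/-- two polynomials are compatible if every nonnegative linear combination
has only real zeros. -/
def Compatible (f g : Polynomial ℝ) : Prop :=
  ∀ c d : ℝ, 0 ≤ c → 0 ≤ d → RealRooted (C c * f + C d * g)

/-- `Interlaces g f` means `g ⪯ f`: both are real-rooted with positive leading
coefficients, and listing the zeros in decreasing order `u` (of `f`) and `v`
(of `g`), either `deg f = deg g` and `vₙ ≤ uₙ ≤ ⋯ ≤ v₁ ≤ u₁`, or
`deg f = deg g + 1` and `uₙ ≤ vₙ₋₁ ≤ ⋯ ≤ v₁ ≤ u₁`. -/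
def Interlaces (g f : Polynomial ℝ) : Prop :=
  0 < f.leadingCoeff ∧ 0 < g.leadingCoeff ∧
  ∃ u v : List ℝ,
    u.Pairwise (· ≥ ·) ∧ v.Pairwise (· ≥ ·) ∧
    f.roots = (u : Multiset ℝ) ∧ g.roots = (v : Multiset ℝ) ∧
    u.length = f.natDegree ∧ v.length = g.natDegree ∧
    (u.length = v.length ∨ u.length = v.length + 1) ∧
    (∀ (i : ℕ) (hv : i < v.length) (hu : i < u.length),
      v.get ⟨i, hv⟩ ≤ u.get ⟨i, hu⟩) ∧
    (∀ (i : ℕ) (hu : i + 1 < u.length) (hv : i < v.length),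
      u.get ⟨i + 1, hu⟩ ≤ v.get ⟨i, hv⟩)

namespace Fisk

noncomputable def cnt (f : Polynomial ℝ) (x : ℝ) : ℕ :=
  (f.roots.filter (fun y => x ≤ y)).card

def Nice (g f : Polynomial ℝ) : Prop :=
  0 < f.leadingCoeff ∧ 0 < g.leadingCoeff ∧
  AllRealRoots f ∧ AllRealRoots g ∧
  (f.natDegree = g.natDegree ∨ f.natDegree = g.natDegree + 1) ∧
  (∀ x, cnt g x ≤ cnt f x ∧ cnt f x ≤ cnt g x + 1)

lemma sorted_countP {l : List ℝ} (hl : l.Pairwise (· ≥ ·)) (c : ℝ → Bool)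
    (hc : ∀ y z : ℝ, y ≤ z → c y → c z) :
    ∀ (p : ℕ) (hp : p < l.length), (c (l.get ⟨p, hp⟩) ↔ p < l.countP c) := by
  induction l with
  | nil => intro p hp; simp at hp
  | cons a t ih =>
    rw [List.pairwise_cons] at hl
    obtain ⟨ha, ht⟩ := hl
    intro p hp
    rcases p with _ | p
    · simp only [List.get, List.countP_cons]
      constructor
      · intro h; rw [if_pos h]; omega
      · intro h
        by_cases hca : c a
        · exact hca
        · rw [if_neg hca, Nat.add_zero] at h
          obtain ⟨y, hy, hcy⟩ := List.countP_pos_iff.mp h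
          exact hc y a (ha y hy) hcy
    · simp only [List.get, List.countP_cons]
      have hp' : p < t.length := by simpa using hp
      constructor
      · intro h
        have h1 := (ih ht p hp').mp h
        have hca : c a := hc _ a (ha _ (t.get_mem _)) h
        rw [if_pos hca]; omega
      · intro h
        apply (ih ht p hp').mpr
        split at h <;> omega

lemma countP_lt_length {l : List ℝ} {c : ℝ → Bool} {p : ℕ} (h : p < l.countP c) :
    p < l.length := lt_of_lt_of_le h (l.countP_le_length (p := c))

lemma cnt_eq_countP {f : Polynomial ℝ} {u : List ℝ} (h : f.roots = ↑u) (x : ℝ) :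
    cnt f x = u.countP (fun y => decide (x ≤ y)) := by
  simp [cnt, h, Multiset.filter_coe, List.countP_eq_length_filter]

lemma le_get_iff {l : List ℝ} (hl : l.Pairwise (· ≥ ·)) (x : ℝ) (p : ℕ) (hp : p < l.length) :
    x ≤ l.get ⟨p, hp⟩ ↔ p < l.countP (fun y => decide (x ≤ y)) := by
  have := sorted_countP hl (fun y => decide (x ≤ y))
    (fun y z hyz hxy => by simp at hxy ⊢; linarith) p hp
  simpa using this


lemma get_le_of_countP_le {u v : List ℝ} (su : u.Pairwise (· ≥ ·)) (sv : v.Pairwise (· ≥ ·))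
    (h : ∀ x : ℝ, v.countP (fun y => decide (x ≤ y)) ≤ u.countP (fun y => decide (x ≤ y)))
    (p : ℕ) (hv : p < v.length) (hu : p < u.length) :
    v.get ⟨p, hv⟩ ≤ u.get ⟨p, hu⟩ := by
  set x := v.get ⟨p, hv⟩ with hx
  have h1 : p < v.countP (fun y => decide (x ≤ y)) := (le_get_iff sv x p hv).mp le_rfl
  have h2 : p < u.countP (fun y => decide (x ≤ y)) := lt_of_lt_of_le h1 (h x)
  exact (le_get_iff su x p hu).mpr h2

lemma get_succ_le_of_countP_le {u v : List ℝ} (su : u.Pairwise (· ≥ ·)) (sv : v.Pairwise (· ≥ ·))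
    (h : ∀ x : ℝ, u.countP (fun y => decide (x ≤ y)) ≤ v.countP (fun y => decide (x ≤ y)) + 1)
    (p : ℕ) (hu : p + 1 < u.length) (hv : p < v.length) :
    u.get ⟨p + 1, hu⟩ ≤ v.get ⟨p, hv⟩ := by
  set x := u.get ⟨p + 1, hu⟩ with hx
  have h1 : p + 1 < u.countP (fun y => decide (x ≤ y)) := (le_get_iff su x _ hu).mp le_rfl
  have h2 : p < v.countP (fun y => decide (x ≤ y)) := by have := h x; omega
  exact (le_get_iff sv x p hv).mpr h2

lemma countP_le_of_get_le {u v : List ℝ} (su : u.Pairwise (· ≥ ·)) (sv : v.Pairwise (· ≥ ·))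
    (hlen : v.length ≤ u.length)
    (h : ∀ (p : ℕ) (hv : p < v.length) (hu : p < u.length), v.get ⟨p, hv⟩ ≤ u.get ⟨p, hu⟩)
    (x : ℝ) : v.countP (fun y => decide (x ≤ y)) ≤ u.countP (fun y => decide (x ≤ y)) := by
  set k := v.countP (fun y => decide (x ≤ y)) with hk
  rcases Nat.eq_zero_or_pos k with h0 | h0
  · omega
  · have hkv : k - 1 < v.length := by
      have := v.countP_le_length (p := fun y => decide (x ≤ y)); omega
    have hku : k - 1 < u.length := by omega
    have hx : x ≤ v.get ⟨k - 1, hkv⟩ := by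
      apply (le_get_iff sv x _ hkv).mpr; omega
    have h2 : x ≤ u.get ⟨k - 1, hku⟩ := le_trans hx (h _ hkv hku)
    have := (le_get_iff su x _ hku).mp h2
    omega

lemma countP_le_succ_of_get_le {u v : List ℝ} (su : u.Pairwise (· ≥ ·)) (sv : v.Pairwise (· ≥ ·))
    (hlen : u.length ≤ v.length + 1)
    (h : ∀ (p : ℕ) (hu : p + 1 < u.length) (hv : p < v.length),
      u.get ⟨p + 1, hu⟩ ≤ v.get ⟨p, hv⟩)
    (x : ℝ) : u.countP (fun y => decide (x ≤ y)) ≤ v.countP (fun y => decide (x ≤ y)) + 1 := by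
  set k := u.countP (fun y => decide (x ≤ y)) with hk
  rcases Nat.lt_or_ge k 2 with h0 | h0
  · omega
  · have hku : k - 1 < u.length := by
      have := u.countP_le_length (p := fun y => decide (x ≤ y)); omega
    have hkv : k - 2 < v.length := by omega
    have hx : x ≤ u.get ⟨k - 1, hku⟩ := by
      apply (le_get_iff su x _ hku).mpr; omega
    have h2' := h (k - 2) (by omega) hkv
    have e : (⟨k - 2 + 1, by omega⟩ : Fin u.length) = ⟨k - 1, hku⟩ := Fin.mk_eq_mk.mpr (by omega)
    have h2'' : u.get ⟨k - 1, hku⟩ ≤ v.get ⟨k - 2, hkv⟩ := by rw [← e]; exact h2'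
    have h2 : x ≤ v.get ⟨k - 2, hkv⟩ := le_trans hx h2'' 
    have := (le_get_iff sv x _ hkv).mp h2
    omega

lemma interlaces_iff_nice {g f : Polynomial ℝ} : Interlaces g f ↔ Nice g f := by
  constructor
  · rintro ⟨hf, hg, u, v, su, sv, hru, hrv, hlu, hlv, halt, h1, h2⟩
    refine ⟨hf, hg, ?_, ?_, ?_, ?_⟩
    · rw [AllRealRoots, hru, Multiset.coe_card, hlu]
    · rw [AllRealRoots, hrv, Multiset.coe_card, hlv]
    · omega
    · intro x
      rw [cnt_eq_countP hru, cnt_eq_countP hrv]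
      exact ⟨countP_le_of_get_le su sv (by omega) h1 x,
        countP_le_succ_of_get_le su sv (by omega) h2 x⟩
  · rintro ⟨hf, hg, haf, hag, halt, hcnt⟩
    have hru : f.roots = ↑(f.roots.sort (· ≥ ·)) := (Multiset.sort_eq _ _).symm
    have hrv : g.roots = ↑(g.roots.sort (· ≥ ·)) := (Multiset.sort_eq _ _).symm
    have hc1 : ∀ x : ℝ, (g.roots.sort (· ≥ ·)).countP (fun y => decide (x ≤ y)) ≤
        (f.roots.sort (· ≥ ·)).countP (fun y => decide (x ≤ y)) := by
      intro x
      have := (hcnt x).1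
      rwa [cnt_eq_countP hru, cnt_eq_countP hrv] at this
    have hc2 : ∀ x : ℝ, (f.roots.sort (· ≥ ·)).countP (fun y => decide (x ≤ y)) ≤
        (g.roots.sort (· ≥ ·)).countP (fun y => decide (x ≤ y)) + 1 := by
      intro x
      have := (hcnt x).2
      rwa [cnt_eq_countP hru, cnt_eq_countP hrv] at this
    refine ⟨hf, hg, f.roots.sort (· ≥ ·), g.roots.sort (· ≥ ·),
      Multiset.pairwise_sort _ _, Multiset.pairwise_sort _ _, hru, hrv, ?_, ?_, ?_,
      get_le_of_countP_le (Multiset.pairwise_sort _ _) (Multiset.pairwise_sort _ _) hc1,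
      get_succ_le_of_countP_le (Multiset.pairwise_sort _ _) (Multiset.pairwise_sort _ _) hc2⟩
    · rw [Multiset.length_sort, haf]
    · rw [Multiset.length_sort, hag]
    · rw [Multiset.length_sort, Multiset.length_sort, haf, hag]; omega

lemma prod_sign (x : ℝ) : ∀ (R : Multiset ℝ), (∀ r ∈ R, r ≠ x) →
    0 < (-1 : ℝ) ^ (Multiset.card (R.filter (fun r => x < r))) *
      (R.map (fun r => x - r)).prod := by
  refine Multiset.induction ?_ ?_
  · intro _; simp
  · intro a R ih hne
    have ha : a ≠ x := hne a (Multiset.mem_cons_self a R)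
    have hR := ih (fun r hr => hne r (Multiset.mem_cons_of_mem hr))
    rw [Multiset.filter_cons, Multiset.map_cons, Multiset.prod_cons]
    by_cases hxa : x < a
    · rw [if_pos hxa]
      simp only [Multiset.card_add, Multiset.card_singleton]
      have : (-1 : ℝ) ^ (1 + Multiset.card (R.filter (fun r => x < r))) *
          ((x - a) * (R.map (fun r => x - r)).prod)
          = (a - x) * ((-1 : ℝ) ^ (Multiset.card (R.filter (fun r => x < r))) *
            (R.map (fun r => x - r)).prod) := by ring
      rw [this]
      exact mul_pos (by linarith) hR
    · rw [if_neg hxa]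
      have hax : a < x := lt_of_le_of_ne (not_lt.mp hxa) ha
      simp only [Multiset.card_add, Multiset.card_zero, zero_add]
      have : (-1 : ℝ) ^ (Multiset.card (R.filter (fun r => x < r))) *
          ((x - a) * (R.map (fun r => x - r)).prod)
          = (x - a) * ((-1 : ℝ) ^ (Multiset.card (R.filter (fun r => x < r))) *
            (R.map (fun r => x - r)).prod) := by ring
      rw [this]
      exact mul_pos (by linarith) hR

lemma sign_eval {f : Polynomial ℝ} (haf : AllRealRoots f) (hlc : 0 < f.leadingCoeff)
    {x : ℝ} (hx : x ∉ f.roots) :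
    0 < (-1 : ℝ) ^ (Multiset.card (f.roots.filter (fun r => x < r))) * f.eval x := by
  have hf0 : f ≠ 0 := fun h => by simp [h, leadingCoeff_zero] at hlc
  have hsplit : f.Splits := splits_iff_card_roots.mpr haf
  have heval : f.eval x = f.leadingCoeff * (f.roots.map (fun r => x - r)).prod := by
    conv_lhs => rw [← C_leadingCoeff_mul_prod_multiset_X_sub_C haf]
    rw [eval_mul, eval_C, eval_multiset_prod, Multiset.map_map]
    congr 2
    ext r
    simp
  have hps := prod_sign x f.roots (fun r hr hrx => hx (hrx ▸ hr))
  rw [heval]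
  calc (0:ℝ) < f.leadingCoeff * ((-1 : ℝ) ^ (Multiset.card (f.roots.filter (fun r => x < r))) *
      (f.roots.map (fun r => x - r)).prod) := mul_pos hlc hps
    _ = _ := by ring

lemma sign_at_point {f : Polynomial ℝ} (haf : AllRealRoots f) (hlc : 0 < f.leadingCoeff)
    {u : List ℝ} (hru : f.roots = ↑u) (su : u.Pairwise (· ≥ ·)) {x : ℝ} {p : ℕ}
    (hlo : ∀ (q : ℕ) (hq : q < u.length), q < p → x < u.get ⟨q, hq⟩)
    (hhi : ∀ (q : ℕ) (hq : q < u.length), p ≤ q → u.get ⟨q, hq⟩ < x)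
    (hp : p ≤ u.length) : 0 < (-1 : ℝ) ^ p * f.eval x := by
  have hx : x ∉ f.roots := by
    rw [hru, Multiset.mem_coe]
    intro hmem
    obtain ⟨q, hq⟩ := List.get_of_mem hmem
    rcases Nat.lt_or_ge q.1 p with h | h
    · exact absurd (hq ▸ hlo q.1 q.2 h) (lt_irrefl x)
    · exact absurd (hq ▸ hhi q.1 q.2 h) (lt_irrefl x)
  have hcard : Multiset.card (f.roots.filter (fun r => x < r)) = p := by
    rw [hru]
    have : Multiset.card ((↑u : Multiset ℝ).filter (fun r => x < r))
        = u.countP (fun r => decide (x < r)) := by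
      simp [Multiset.filter_coe, List.countP_eq_length_filter]
    rw [this]
    have hmono : ∀ y z : ℝ, y ≤ z → (fun r => decide (x < r)) y → (fun r => decide (x < r)) z := by
      intro y z hyz h; simp at h ⊢; linarith
    have hiff := sorted_countP su (fun r => decide (x < r)) hmono
    have h1 : u.countP (fun r => decide (x < r)) ≤ p := by
      by_contra hcon
      push_neg at hcon
      have hplen : p < u.length := lt_of_lt_of_le hcon (u.countP_le_length)
      have := (hiff p hplen).mpr hcon
      simp at this
      exact absurd (hhi p hplen le_rfl) (not_lt.mpr this.le)
    have h2 : p ≤ u.countP (fun r => decide (x < r)) := by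
      rcases Nat.eq_zero_or_pos p with h0 | h0
      · omega
      · have hq : p - 1 < u.length := by omega
        have := (hiff (p - 1) hq).mp (by simp; exact hlo (p - 1) hq (by omega))
        omega
    omega
  have := sign_eval haf hlc hx
  rwa [hcard] at this

lemma exists_root_Ioo {h : Polynomial ℝ} {a b : ℝ} (hab : a < b)
    (hs : h.eval a * h.eval b < 0) :
    ∃ w, a < w ∧ w < b ∧ h.eval w = 0 := by
  have hc : ContinuousOn (fun y => h.eval y) (Set.Icc a b) :=
    (Polynomial.continuous h).continuousOn
  rcases lt_or_ge (h.eval a) 0 with ha | ha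
  · have hb : 0 < h.eval b := by nlinarith
    have h0 : (0:ℝ) ∈ Set.Ioo (h.eval a) (h.eval b) := ⟨ha, hb⟩
    obtain ⟨w, hw, hweq⟩ := intermediate_value_Ioo hab.le hc h0
    exact ⟨w, hw.1, hw.2, hweq⟩
  · have ha' : 0 < h.eval a := by
      rcases eq_or_lt_of_le ha with h' | h'
      · rw [← h'] at hs; simp at hs
      · exact h'
    have hb : h.eval b < 0 := by nlinarith
    have h0 : (0:ℝ) ∈ Set.Ioo (h.eval b) (h.eval a) := ⟨hb, ha'⟩
    obtain ⟨w, hw, hweq⟩ := intermediate_value_Ioo' hab.le hc h0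
    exact ⟨w, hw.1, hw.2, hweq⟩

lemma countP_le_of_get_le' : ∀ (a b : List ℝ), a.length = b.length →
    (∀ (p : ℕ) (hpa : p < a.length) (hpb : p < b.length), a.get ⟨p, hpa⟩ ≤ b.get ⟨p, hpb⟩) →
    ∀ x : ℝ, a.countP (fun y => decide (x ≤ y)) ≤ b.countP (fun y => decide (x ≤ y)) := by
  intro a
  induction a with
  | nil => intro b _ _ _; simp
  | cons a0 t ih =>
    intro b hlen hle x
    cases b with
    | nil => simp at hlen
    | cons b0 s =>
      simp only [List.countP_cons]
      have h0 : a0 ≤ b0 := hle 0 (by simp) (by simp)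
      have ht := ih s (by simpa using hlen)
        (fun p hpa hpb => hle (p + 1) (by simpa using hpa) (by simpa using hpb)) x
      by_cases hxa : x ≤ a0
      · rw [if_pos (by simpa using hxa), if_pos (by simp; linarith)]
        omega
      · rw [if_neg (by simpa using hxa)]
        split <;> omega

lemma nodup_coe_le_roots {h : Polynomial ℝ} (hh : h ≠ 0) {w : List ℝ} (hnd : w.Nodup)
    (hmem : ∀ r ∈ w, h.IsRoot r) : ↑w ≤ h.roots := by
  rw [Multiset.le_iff_count]
  intro a
  by_cases ha : a ∈ w
  · have h1 : (↑w : Multiset ℝ).count a = 1 := by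
      rw [Multiset.coe_count]
      exact List.count_eq_one_of_mem hnd ha
    rw [h1]
    rw [Multiset.one_le_count_iff_mem, mem_roots hh]
    exact hmem a ha
  · have h1 : (↑w : Multiset ℝ).count a = 0 := by
      rw [Multiset.coe_count, List.count_eq_zero]
      exact ha
    omega

lemma add_lemma {f g : Polynomial ℝ} (hf : 0 < f.leadingCoeff) (hg : 0 < g.leadingCoeff)
    (hd : g.natDegree ≤ f.natDegree) :
    (f + g).natDegree = f.natDegree ∧ 0 < (f + g).leadingCoeff := by
  have hgco : 0 ≤ g.coeff f.natDegree := by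
    rcases lt_or_eq_of_le hd with h | h
    · rw [coeff_eq_zero_of_natDegree_lt h]
    · rw [← h, coeff_natDegree]; exact hg.le
  have hco : 0 < (f + g).coeff f.natDegree := by
    rw [coeff_add]
    have := f.coeff_natDegree
    rw [this] -- f.coeff f.natDegree = f.leadingCoeff
    linarith
  have hdeg : (f + g).natDegree = f.natDegree := by
    refine le_antisymm ?_ (le_natDegree_of_ne_zero hco.ne')
    exact le_trans (natDegree_add_le f g) (by omega)
  refine ⟨hdeg, ?_⟩
  rw [leadingCoeff, hdeg]
  exact hco

lemma cnt_cons {f f₁ : Polynomial ℝ} {α : ℝ} (h : f.roots = α ::ₘ f₁.roots) (x : ℝ) :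
    cnt f x = (if x ≤ α then 1 else 0) + cnt f₁ x := by
  rw [cnt, h, Multiset.filter_cons, Multiset.card_add, cnt]
  congr 1
  split <;> simp

lemma sum_nice : ∀ (n : ℕ) {f g : Polynomial ℝ}, f.natDegree = n → Nice g f →
    AllRealRoots (f + g) ∧ (f + g).natDegree = f.natDegree ∧ 0 < (f + g).leadingCoeff ∧
    (∀ x, cnt g x ≤ cnt (f + g) x ∧ cnt (f + g) x ≤ cnt f x) := by
  intro n
  induction n using Nat.strong_induction_on with
  | _ n ih =>
  intro f g hn hnice
  obtain ⟨hlf, hlg, haf, hag, halt, hcnt⟩ := hnice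
  have hf0 : f ≠ 0 := leadingCoeff_ne_zero.mp hlf.ne'
  have hg0 : g ≠ 0 := leadingCoeff_ne_zero.mp hlg.ne'
  have hdle : g.natDegree ≤ f.natDegree := by omega
  obtain ⟨hdeg, hlfg⟩ := add_lemma hlf hlg hdle
  have hfg0 : f + g ≠ 0 := leadingCoeff_ne_zero.mp hlfg.ne'
  by_cases hcom : ∃ α, α ∈ f.roots ∧ α ∈ g.roots
  · obtain ⟨α, hαf, hαg⟩ := hcom
    obtain ⟨f₁, hf₁⟩ := dvd_iff_isRoot.mpr (isRoot_of_mem_roots hαf)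
    obtain ⟨g₁, hg₁⟩ := dvd_iff_isRoot.mpr (isRoot_of_mem_roots hαg)
    have hXα : (X - C α : Polynomial ℝ) ≠ 0 := X_sub_C_ne_zero α
    have hf₁0 : f₁ ≠ 0 := by rintro rfl; rw [mul_zero] at hf₁; exact hf0 hf₁
    have hg₁0 : g₁ ≠ 0 := by rintro rfl; rw [mul_zero] at hg₁; exact hg0 hg₁
    have hdf : f.natDegree = f₁.natDegree + 1 := by
      rw [hf₁, natDegree_mul hXα hf₁0, natDegree_X_sub_C]; ring
    have hdg : g.natDegree = g₁.natDegree + 1 := by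
      rw [hg₁, natDegree_mul hXα hg₁0, natDegree_X_sub_C]; ring
    have hrf : f.roots = α ::ₘ f₁.roots := by
      rw [hf₁, roots_mul (hf₁ ▸ hf0), roots_X_sub_C, Multiset.singleton_add]
    have hrg : g.roots = α ::ₘ g₁.roots := by
      rw [hg₁, roots_mul (hg₁ ▸ hg0), roots_X_sub_C, Multiset.singleton_add]
    have hlcf : f.leadingCoeff = f₁.leadingCoeff := by
      rw [hf₁, leadingCoeff_mul, leadingCoeff_X_sub_C, one_mul]
    have hlcg : g.leadingCoeff = g₁.leadingCoeff := by
      rw [hg₁, leadingCoeff_mul, leadingCoeff_X_sub_C, one_mul]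
    have haf₁ : AllRealRoots f₁ := by
      have := haf; rw [AllRealRoots, hrf, Multiset.card_cons] at this
      rw [AllRealRoots]; omega
    have hag₁ : AllRealRoots g₁ := by
      have := hag; rw [AllRealRoots, hrg, Multiset.card_cons] at this
      rw [AllRealRoots]; omega
    have hnice₁ : Nice g₁ f₁ := by
      refine ⟨hlcf ▸ hlf, hlcg ▸ hlg, haf₁, hag₁, by omega, ?_⟩
      intro x
      have h1 := hcnt x
      rw [cnt_cons hrf x, cnt_cons hrg x] at h1
      constructor <;> [skip; skip] <;>
        · rcases h1 with ⟨h1a, h1b⟩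
          split at h1a <;> split at h1b <;> omega
    obtain ⟨ha₁, hd₁, hl₁, hc₁⟩ := ih f₁.natDegree (by omega) rfl hnice₁
    have hsum : f + g = (X - C α) * (f₁ + g₁) := by rw [hf₁, hg₁]; ring
    have hh₁0 : f₁ + g₁ ≠ 0 := leadingCoeff_ne_zero.mp hl₁.ne'
    have hrfg : (f + g).roots = α ::ₘ (f₁ + g₁).roots := by
      rw [hsum, roots_mul (hsum ▸ hfg0), roots_X_sub_C, Multiset.singleton_add]
    refine ⟨?_, hdeg, hlfg, ?_⟩
    · rw [AllRealRoots, hrfg, Multiset.card_cons, ha₁, hdeg, hd₁]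
      omega
    · intro x
      have h2 := hc₁ x
      have e1 := cnt_cons hrfg x
      have e2 := cnt_cons hrf x
      have e3 := cnt_cons hrg x
      rw [e1, e2, e3]
      constructor <;>
        · rcases h2 with ⟨h2a, h2b⟩
          split <;> omega
  · push_neg at hcom
    set u := f.roots.sort (· ≥ ·) with hu_def
    set v := g.roots.sort (· ≥ ·) with hv_def
    have su : u.Pairwise (· ≥ ·) := Multiset.pairwise_sort _ _
    have sv : v.Pairwise (· ≥ ·) := Multiset.pairwise_sort _ _
    have hru : f.roots = ↑u := (Multiset.sort_eq _ _).symm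
    have hrv : g.roots = ↑v := (Multiset.sort_eq _ _).symm
    have hlu : u.length = f.natDegree := by
      rw [hu_def, Multiset.length_sort]; exact haf
    have hlv : v.length = g.natDegree := by
      rw [hv_def, Multiset.length_sort]; exact hag
    have hlen : u.length = v.length ∨ u.length = v.length + 1 := by omega
    have hlenvu : v.length ≤ u.length := by omega
    have humem : ∀ (p : ℕ) (hp : p < u.length), u.get ⟨p, hp⟩ ∈ f.roots := by
      intro p hp; rw [hru, Multiset.mem_coe]; exact List.get_mem u _
    have hvmem : ∀ (p : ℕ) (hp : p < v.length), v.get ⟨p, hp⟩ ∈ g.roots := by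
      intro p hp; rw [hrv, Multiset.mem_coe]; exact List.get_mem v _
    have hc1 : ∀ x : ℝ, v.countP (fun y => decide (x ≤ y)) ≤ u.countP (fun y => decide (x ≤ y)) := by
      intro x
      have := (hcnt x).1; rwa [cnt_eq_countP hru, cnt_eq_countP hrv] at this
    have hc2 : ∀ x : ℝ, u.countP (fun y => decide (x ≤ y)) ≤ v.countP (fun y => decide (x ≤ y)) + 1 := by
      intro x
      have := (hcnt x).2; rwa [cnt_eq_countP hru, cnt_eq_countP hrv] at this
    have hvu : ∀ (p : ℕ) (hv' : p < v.length) (hu' : p < u.length),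
        v.get ⟨p, hv'⟩ < u.get ⟨p, hu'⟩ := by
      intro p hv' hu'
      refine lt_of_le_of_ne (get_le_of_countP_le su sv hc1 p hv' hu') ?_
      intro he
      exact hcom _ (humem p hu') (he ▸ hvmem p hv')
    have huv : ∀ (p : ℕ) (hu' : p + 1 < u.length) (hv' : p < v.length),
        u.get ⟨p + 1, hu'⟩ < v.get ⟨p, hv'⟩ := by
      intro p hu' hv'
      refine lt_of_le_of_ne (get_succ_le_of_countP_le su sv hc2 p hu' hv') ?_
      intro he
      exact hcom _ (humem (p+1) hu') (he ▸ hvmem p hv')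
    have humono : ∀ (p q : ℕ) (hp : p < u.length) (hq : q < u.length), p ≤ q →
        u.get ⟨q, hq⟩ ≤ u.get ⟨p, hp⟩ := by
      intro p q hp hq hpq
      rcases eq_or_lt_of_le hpq with rfl | h
      · exact le_refl _
      · exact su.rel_get_of_lt h
    have hvmono : ∀ (p q : ℕ) (hp : p < v.length) (hq : q < v.length), p ≤ q →
        v.get ⟨q, hq⟩ ≤ v.get ⟨p, hp⟩ := by
      intro p q hp hq hpq
      rcases eq_or_lt_of_le hpq with rfl | h
      · exact le_refl _
      · exact sv.rel_get_of_lt h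
    have hS2 : ∀ (p : ℕ) (hu' : p < u.length), p ≤ v.length →
        0 < (-1:ℝ)^p * (f+g).eval (u.get ⟨p, hu'⟩) := by
      intro p hu' hpm
      have hx0 : f.eval (u.get ⟨p, hu'⟩) = 0 := isRoot_of_mem_roots (humem p hu')
      have he : (f+g).eval (u.get ⟨p, hu'⟩) = g.eval (u.get ⟨p, hu'⟩) := by
        rw [eval_add, hx0, zero_add]
      rw [he]
      apply sign_at_point hag hlg hrv sv (p := p) ?_ ?_ (by omega)
      · intro q hq hqp
        have h1 : u.get ⟨p, hu'⟩ ≤ u.get ⟨(p-1)+1, by omega⟩ :=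
          humono ((p-1)+1) p (by omega) hu' (by omega)
        have h2 : u.get ⟨(p-1)+1, by omega⟩ < v.get ⟨p-1, by omega⟩ :=
          huv (p-1) (by omega) (by omega)
        have h3 : v.get ⟨p-1, by omega⟩ ≤ v.get ⟨q, hq⟩ :=
          hvmono q (p-1) hq (by omega) (by omega)
        linarith
      · intro q hq hpq
        have h1 : v.get ⟨q, hq⟩ < u.get ⟨q, by omega⟩ := hvu q hq (by omega)
        have h2 : u.get ⟨q, by omega⟩ ≤ u.get ⟨p, hu'⟩ := humono p q hu' (by omega) hpq
        linarith
    have hS1 : ∀ (p : ℕ) (hv' : p < v.length),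
        0 < (-1:ℝ)^(p+1) * (f+g).eval (v.get ⟨p, hv'⟩) := by
      intro p hv'
      have hx0 : g.eval (v.get ⟨p, hv'⟩) = 0 := isRoot_of_mem_roots (hvmem p hv')
      have he : (f+g).eval (v.get ⟨p, hv'⟩) = f.eval (v.get ⟨p, hv'⟩) := by
        rw [eval_add, hx0, add_zero]
      rw [he]
      apply sign_at_point haf hlf hru su (p := p+1) ?_ ?_ (by omega)
      · intro q hq hqp
        have h1 : v.get ⟨p, hv'⟩ < u.get ⟨p, by omega⟩ := hvu p hv' (by omega)
        have h2 : u.get ⟨p, by omega⟩ ≤ u.get ⟨q, hq⟩ := humono q p hq (by omega) (by omega)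
        linarith
      · intro q hq hpq
        have h1 : u.get ⟨p+1, by omega⟩ < v.get ⟨p, hv'⟩ := huv p (by omega) hv'
        have h2 : u.get ⟨q, hq⟩ ≤ u.get ⟨p+1, by omega⟩ := humono (p+1) q (by omega) hq hpq
        linarith
    have hpowsq : ∀ p : ℕ, ((-1:ℝ)^p)^2 = 1 := by
      intro p
      rw [← pow_mul, mul_comm, pow_mul]
      norm_num
    have hroot : ∀ (p : ℕ) (hv' : p < v.length),
        ∃ z, v.get ⟨p, hv'⟩ < z ∧ z < u.get ⟨p, by omega⟩ ∧ (f+g).eval z = 0 := by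
      intro p hv'
      have hA := hS2 p (by omega) (by omega)
      have hB := hS1 p hv'
      apply exists_root_Ioo (hvu p hv' (by omega))
      have hpow : (-1:ℝ)^(p+1) = -((-1:ℝ)^p) := by rw [pow_succ]; ring
      rw [hpow] at hB
      have h2 : (-1:ℝ)^p * (f+g).eval (v.get ⟨p, hv'⟩) < 0 := by linarith
      have h3 := mul_neg_of_pos_of_neg hA h2
      have h4 : ((-1:ℝ)^p * (f+g).eval (u.get ⟨p, by omega⟩)) *
          ((-1:ℝ)^p * (f+g).eval (v.get ⟨p, hv'⟩)) =
          ((-1:ℝ)^p)^2 * ((f+g).eval (v.get ⟨p, hv'⟩) * (f+g).eval (u.get ⟨p, by omega⟩)) := by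
        ring
      rw [h4, hpowsq, one_mul] at h3
      exact h3
    let W : Fin v.length → ℝ := fun p => Classical.choose (hroot p.1 p.2)
    have hW : ∀ p : Fin v.length, v.get ⟨p.1, p.2⟩ < W p ∧
        W p < u.get ⟨p.1, by omega⟩ ∧ (f+g).eval (W p) = 0 :=
      fun p => Classical.choose_spec (hroot p.1 p.2)
    have hWanti : ∀ p q : Fin v.length, p.1 < q.1 → W q < W p := by
      intro p q hpq
      have h1 : W q < u.get ⟨q.1, by omega⟩ := (hW q).2.1
      have h2 : u.get ⟨q.1, by omega⟩ ≤ u.get ⟨p.1+1, by omega⟩ :=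
        humono (p.1+1) q.1 (by omega) (by omega) (by omega)
      have h3 : u.get ⟨p.1+1, by omega⟩ < v.get ⟨p.1, p.2⟩ := huv p.1 (by omega) p.2
      have h4 := (hW p).1
      linarith
    set w : List ℝ := List.ofFn W with hw_def
    have hwlen : w.length = v.length := List.length_ofFn (f := W)
    have hwget : ∀ (p : ℕ) (hp : p < w.length), w.get ⟨p, hp⟩ = W ⟨p, by omega⟩ := by
      intro p hp
      exact List.get_ofFn W ⟨p, hp⟩
    have hwnd : w.Nodup := by
      rw [hw_def]
      refine List.nodup_ofFn.mpr ?_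
      intro p q hpq
      rcases lt_trichotomy p.1 q.1 with h | h | h
      · exact absurd (hpq ▸ hWanti p q h) (lt_irrefl _)
      · exact Fin.ext h
      · exact absurd (hpq ▸ hWanti q p h) (lt_irrefl _)
    have hwmem : ∀ s ∈ w, (f+g).IsRoot s := by
      intro s hs
      rw [hw_def, List.mem_ofFn] at hs
      obtain ⟨p, rfl⟩ := hs
      exact (hW p).2.2
    have hwle : (↑w : Multiset ℝ) ≤ (f+g).roots := nodup_coe_le_roots hfg0 hwnd hwmem
    rcases hlen with hlen | hlen
    · -- equal degrees
      have hweq : (↑w : Multiset ℝ) = (f+g).roots := by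
        apply Multiset.eq_of_le_of_card_le hwle
        have := card_roots' (f+g)
        simp only [Multiset.coe_card]
        omega
      have hARR : AllRealRoots (f+g) := by
        rw [AllRealRoots, ← hweq, Multiset.coe_card]
        omega
      refine ⟨hARR, hdeg, hlfg, ?_⟩
      intro x
      rw [cnt_eq_countP hweq.symm, cnt_eq_countP hru, cnt_eq_countP hrv]
      constructor
      · apply countP_le_of_get_le' v w (by omega)
        intro p hpv hpw
        rw [hwget p hpw]
        exact ((hW ⟨p, hpv⟩).1).le
      · apply countP_le_of_get_le' w u (by omega)
        intro p hpw hpu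
        rw [hwget p hpw]
        exact ((hW ⟨p, by omega⟩).2.1).le
    · -- deg f = deg g + 1
      set P : Polynomial ℝ := ((↑w : Multiset ℝ).map (fun a => X - C a)).prod with hP_def
      have hPdvd : P ∣ (f + g) :=
        dvd_trans (Multiset.prod_dvd_prod_of_le (Multiset.map_le_map hwle))
          (prod_multiset_X_sub_C_dvd (f+g))
      obtain ⟨q, hq⟩ := hPdvd
      have hPm : P.Monic := by
        rw [hP_def]
        refine monic_multiset_prod_of_monic _ _ ?_
        intro a _
        exact monic_X_sub_C a
      have hP0 : P ≠ 0 := hPm.ne_zero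
      have hq0 : q ≠ 0 := by rintro rfl; rw [mul_zero] at hq; exact hfg0 hq
      have hPdeg : P.natDegree = v.length := by
        rw [hP_def, natDegree_multiset_prod_X_sub_C_eq_card, Multiset.coe_card, hwlen]
      have hqdeg : q.natDegree = 1 := by
        have hmul := natDegree_mul hP0 hq0
        rw [← hq] at hmul
        omega
      have hc1' : q.coeff 1 ≠ 0 := by
        have hlcq : q.coeff 1 = q.leadingCoeff := by rw [leadingCoeff, hqdeg]
        rw [hlcq]
        exact leadingCoeff_ne_zero.mpr hq0
      obtain ⟨r, hr_def⟩ : ∃ r : ℝ, r = -(q.coeff 0) / q.coeff 1 := ⟨_, rfl⟩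
      have hq_eq : q = C (q.coeff 1) * X + C (q.coeff 0) :=
        eq_X_add_C_of_natDegree_le_one (by omega)
      have hqr : q.eval r = 0 := by
        conv_lhs => rw [hq_eq]
        simp only [eval_add, eval_mul, eval_C, eval_X]
        rw [hr_def]
        field_simp
        ring
      have hqroots : q.roots = {r} := by
        symm
        apply Multiset.eq_of_le_of_card_le
        · rw [Multiset.singleton_le, mem_roots hq0]
          exact hqr
        · have := card_roots' q
          simp only [Multiset.card_singleton]
          omega
      have hrfg : (f+g).roots = ↑w + {r} := by
        rw [hq, roots_mul (hq ▸ hfg0), hP_def, roots_multiset_prod_X_sub_C, hqroots]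
      have hARR : AllRealRoots (f+g) := by
        rw [AllRealRoots, hrfg, Multiset.card_add, Multiset.coe_card, Multiset.card_singleton]
        omega
      have hrle : r ≤ u.get ⟨v.length, by omega⟩ := by
        by_contra hcon
        push_neg at hcon
        have hallgt : ∀ s ∈ (f+g).roots, u.get ⟨v.length, by omega⟩ < s := by
          intro s hs
          rw [hrfg] at hs
          rcases Multiset.mem_add.mp hs with hs | hs
          · rw [Multiset.mem_coe, hw_def, List.mem_ofFn] at hs
            obtain ⟨p, rfl⟩ := hs
            have h1 := (hW p).1
            have h2 : u.get ⟨p.1+1, by omega⟩ < v.get ⟨p.1, p.2⟩ := huv p.1 (by omega) p.2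
            have h3 : u.get ⟨v.length, by omega⟩ ≤ u.get ⟨p.1+1, by omega⟩ :=
              humono (p.1+1) v.length (by omega) (by omega) (by omega)
            linarith
          · rw [Multiset.mem_singleton] at hs
            subst hs
            exact hcon
        have hx0nr : u.get ⟨v.length, by omega⟩ ∉ (f+g).roots :=
          fun h => lt_irrefl _ (hallgt _ h)
        have hsign1 := sign_eval hARR hlfg hx0nr
        rw [Multiset.filter_eq_self.mpr (fun s hs => hallgt s hs)] at hsign1
        have hcard : Multiset.card (f+g).roots = v.length + 1 := by
          rw [hARR]; omega
        rw [hcard] at hsign1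
        have hsign2 := hS2 v.length (by omega) (le_refl _)
        have hpow : (-1:ℝ)^(v.length+1) = -((-1:ℝ)^(v.length)) := by rw [pow_succ]; ring
        rw [hpow] at hsign1
        linarith
      refine ⟨hARR, hdeg, hlfg, ?_⟩
      intro x
      have hcnth : cnt (f+g) x = w.countP (fun y => decide (x ≤ y)) +
          (if x ≤ r then 1 else 0) := by
        rw [cnt, hrfg, Multiset.filter_add, Multiset.card_add]
        congr 1
        · simp [Multiset.filter_coe, List.countP_eq_length_filter]
        · rw [Multiset.filter_singleton]
          split <;> simp
      rw [hcnth, cnt_eq_countP hru, cnt_eq_countP hrv]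
      constructor
      · have h1 : v.countP (fun y => decide (x ≤ y)) ≤ w.countP (fun y => decide (x ≤ y)) := by
          apply countP_le_of_get_le' v w (by omega)
          intro p hpv hpw
          rw [hwget p hpw]
          exact ((hW ⟨p, hpv⟩).1).le
        split <;> omega
      · have h2 : (w ++ [r]).countP (fun y => decide (x ≤ y)) =
            w.countP (fun y => decide (x ≤ y)) + (if x ≤ r then 1 else 0) := by
          rw [List.countP_append]
          congr 1
          by_cases hxr : x ≤ r <;> simp [List.countP_cons, hxr]
        have h1 : (w ++ [r]).countP (fun y => decide (x ≤ y)) ≤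
            u.countP (fun y => decide (x ≤ y)) := by
          apply countP_le_of_get_le' (w ++ [r]) u (by simp [hwlen]; omega)
          intro p hpa hpu
          rcases Nat.lt_or_ge p w.length with hpw | hpw
          · have he : (w ++ [r]).get ⟨p, hpa⟩ = w.get ⟨p, hpw⟩ := by
              simp only [List.get_eq_getElem]
              exact List.getElem_append_left hpw
            rw [he, hwget p hpw]
            have h3 : W ⟨p, by omega⟩ < u.get ⟨p, by omega⟩ := (hW ⟨p, by omega⟩).2.1
            have h4 : u.get ⟨p, by omega⟩ ≤ u.get ⟨p, hpu⟩ := le_refl _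
            linarith
          · have hp_eq : p = w.length := by
              simp only [List.length_append, List.length_singleton] at hpa
              omega
            subst hp_eq
            have he : (w ++ [r]).get ⟨w.length, hpa⟩ = r := by
              simp only [List.get_eq_getElem]
              exact List.getElem_concat_length rfl _
            rw [he]
            have : u.get ⟨v.length, by omega⟩ ≤ u.get ⟨w.length, hpu⟩ := by
              apply humono <;> omega
            linarith
        omega

lemma realRooted_of_allRealRoots {f : Polynomial ℝ} (hf : AllRealRoots f) : RealRooted f := by
  intro z hz
  by_cases h0 : f = 0
  · subst h0
    simp at hz
  · have hsplit : f.Splits := splits_iff_card_roots.mpr hf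
    rw [← roots_map_of_injective_of_card_eq_natDegree (algebraMap ℝ ℂ).injective hf] at hz
    obtain ⟨a, _, rfl⟩ := Multiset.mem_map.mp hz
    simp [Complex.ofReal_im]


end Fisk

open Fisk in
theorem consecutive_sums_of_mutually_interlacing (m : ℕ)
    (f : ℕ → Polynomial ℝ)
    (hlead : ∀ k, 1 ≤ k → k ≤ m → 0 < (f k).leadingCoeff)
    (hmut : ∀ i j, 1 ≤ i → i < j → j ≤ m → Interlaces (f i) (f j)) :
    ∀ i j, 1 ≤ i → i < j → j ≤ m →
      RealRooted (∑ k ∈ Finset.Icc i j, f k) ∧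
      Interlaces (f i) (∑ k ∈ Finset.Icc i j, f k) ∧
      Interlaces (∑ k ∈ Finset.Icc i j, f k) (f j) := by
  intro i j hi hij hjm
  have key : ∀ j, i + 1 ≤ j → j ≤ m →
      Nice (f i) (∑ k ∈ Finset.Icc i j, f k) ∧
      Nice (∑ k ∈ Finset.Icc i j, f k) (f j) := by
    intro j hj
    induction j, hj using Nat.le_induction with
    | base =>
      intro hm
      have hsum : ∑ k ∈ Finset.Icc i (i+1), f k = f (i+1) + f i := by
        rw [Finset.sum_Icc_succ_top (by omega), Finset.Icc_self, Finset.sum_singleton]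
        ring
      obtain ⟨hl1, hl0, ha1, ha0, hd10, hc10⟩ :=
        interlaces_iff_nice.mp (hmut i (i+1) hi (by omega) hm)
      obtain ⟨hARR, hdg, hlc, hcnts⟩ := sum_nice (f (i+1)).natDegree rfl
        ⟨hl1, hl0, ha1, ha0, hd10, hc10⟩
      rw [hsum]
      refine ⟨⟨hlc, hl0, hARR, ha0, by omega, ?_⟩, ⟨hl1, hlc, ha1, hARR, by omega, ?_⟩⟩
      · intro x
        have h1 := hcnts x
        have h2 := hc10 x
        omega
      · intro x
        have h1 := hcnts x
        have h2 := hc10 x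
        omega
    | succ j hj ihj =>
      intro hm
      obtain ⟨hP1, hP2⟩ := ihj (by omega)
      obtain ⟨hlS', hlfi, haS', hafi, hdSi, hcSi⟩ := hP1
      obtain ⟨hlfj, hlS'2, hafj, haS'2, hdjS, hcjS⟩ := hP2
      obtain ⟨hlj1, hlfi2, haj1, hafi2, hdj1i, hcj1i⟩ :=
        interlaces_iff_nice.mp (hmut i (j+1) hi (by omega) hm)
      obtain ⟨hlj1b, hlfjb, haj1b, hafjb, hdj1j, hcj1j⟩ :=
        interlaces_iff_nice.mp (hmut j (j+1) (by omega) (by omega) hm)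
      have hsum : ∑ k ∈ Finset.Icc i (j+1), f k =
          f (j+1) + ∑ k ∈ Finset.Icc i j, f k := by
        rw [Finset.sum_Icc_succ_top (by omega)]
        ring
      have hNS' : Nice (∑ k ∈ Finset.Icc i j, f k) (f (j+1)) := by
        refine ⟨hlj1, hlS', haj1, haS', by omega, ?_⟩
        intro x
        have h1 := hcSi x
        have h2 := hcjS x
        have h3 := hcj1i x
        have h4 := hcj1j x
        omega
      obtain ⟨hARR, hdg, hlc, hcnts⟩ := sum_nice (f (j+1)).natDegree rfl hNS'
      rw [hsum]
      refine ⟨⟨hlc, hlfi, hARR, hafi, by omega, ?_⟩, ⟨hlj1, hlc, haj1, hARR, by omega, ?_⟩⟩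
      · intro x
        have h1 := hcnts x
        have h2 := hcSi x
        have h3 := hcj1i x
        omega
      · intro x
        have h1 := hcnts x
        have h2 := hcSi x
        have h3 := hcj1i x
        have h4 := hcjS x
        have h5 := hcj1j x
        omega
  obtain ⟨hK1, hK2⟩ := key j (by omega) hjm
  refine ⟨realRooted_of_allRealRoots hK1.2.2.1, interlaces_iff_nice.mpr hK1,
    interlaces_iff_nice.mpr hK2⟩
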